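/- Let k ≥ 3 be an integer, let a : ℝ → ℝ be k times continuously differentiable, and let g : ℝ → ℝ be infinitely differentiable with compact support. Then for every y ∈ ℝ: ∫_y^∞ ((x−y)^{k−3}/(k−3)!) a(x) (−1)^k g^{(k)}(x) dx = a(y) g″(y) − (k−2) a′(y) g′(y) + ((k−1)(k−2)/2) a″(y) g(y) + ∫_y^∞ g(x) (d/dx)^k [ ((x−y)^{k−3}/(k−3)!) a(x) ] dx, where (d/dx)^k is taken with y fixed. -/

import Mathlib

open MeasureTheory Finset

-- helper: C¹ of iterated deriv
lemma contDiff_one_iterD {f : ℝ → ℝ} {n : ℕ∞} (hf : ContDiff ℝ n f) {j : ℕ}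
    (hj : (j + 1 : ℕ) ≤ n) : ContDiff ℝ 1 (iteratedDeriv j f) := by
  rw [contDiff_one_iff_deriv]
  refine ⟨hf.differentiable_iteratedDeriv j ?_, ?_⟩
  · exact_mod_cast lt_of_lt_of_le (by exact_mod_cast Nat.lt_succ_self j) hj
  · rw [← iteratedDeriv_succ]
    exact hf.continuous_iteratedDeriv (j+1) (by exact_mod_cast hj)

lemma hcs_iterD {g : ℝ → ℝ} (hgs : HasCompactSupport g) (n : ℕ) :
    HasCompactSupport (iteratedDeriv n g) := by
  induction n with
  | zero => simpa [iteratedDeriv_zero] using hgs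
  | succ n ih => rw [iteratedDeriv_succ]; exact ih.deriv

lemma ibp_step (u v : ℝ → ℝ) (hu : ContDiff ℝ 1 u) (hv : ContDiff ℝ 1 v)
    (hvs : HasCompactSupport v) (y : ℝ) :
    ∫ x in Set.Ioi y, u x * deriv v x
      = -(u y * v y) - ∫ x in Set.Ioi y, deriv u x * v x := by
  have hud : Differentiable ℝ u := hu.differentiable one_ne_zero
  have hvd : Differentiable ℝ v := hv.differentiable one_ne_zero
  have huc' : Continuous (deriv u) := hu.continuous_deriv le_rfl
  have hvc' : Continuous (deriv v) := hv.continuous_deriv le_rfl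
  have hprod : HasCompactSupport (fun x => u x * v x) := hvs.mul_left
  have hprod1 : ContDiff ℝ 1 (fun x => u x * v x) := hu.mul hv
  have key := hprod.integral_Ioi_deriv_eq hprod1 y
  have hderiv : ∀ x : ℝ, deriv (fun x => u x * v x) x = deriv u x * v x + u x * deriv v x :=
    fun x => deriv_mul (hud x) (hvd x)
  rw [MeasureTheory.setIntegral_congr_fun measurableSet_Ioi
    (fun x _ => hderiv x)] at key
  have h1 : IntegrableOn (fun x => deriv u x * v x) (Set.Ioi y) :=
    ((huc'.mul hvd.continuous).integrable_of_hasCompactSupport hvs.mul_left).integrableOn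
  have h2 : IntegrableOn (fun x => u x * deriv v x) (Set.Ioi y) :=
    ((hud.continuous.mul hvc').integrable_of_hasCompactSupport hvs.deriv.mul_left).integrableOn
  rw [MeasureTheory.integral_add h1 h2] at key
  linarith

lemma pascal_sum (u v : ℕ → ℝ) (j : ℕ) :
    ∑ i ∈ range (j + 1),
        ((j.choose i : ℝ) * u (i + 1) * v (j - i) + (j.choose i : ℝ) * u i * v (j - i + 1))
      = ∑ i ∈ range (j + 2), ((j + 1).choose i : ℝ) * u i * v (j + 1 - i) := by
  rw [Finset.sum_range_succ' (fun i => ((j + 1).choose i : ℝ) * u i * v (j + 1 - i)) (j + 1)]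
  simp only [Nat.choose_succ_succ, Nat.succ_sub_succ, Nat.choose_zero_right, Nat.cast_add,
    Nat.cast_one, add_mul, one_mul, Nat.sub_zero]
  rw [Finset.sum_add_distrib, Finset.sum_add_distrib]
  have h1 : ∑ i ∈ range (j + 1), (j.choose i : ℝ) * u i * v (j - i + 1)
      = ∑ i ∈ range j, (j.choose (i + 1) : ℝ) * u (i + 1) * v (j - (i + 1) + 1)
        + (j.choose 0 : ℝ) * u 0 * v (j - 0 + 1) :=
    Finset.sum_range_succ' _ j
  have h2 : ∀ i ∈ range j, (j.choose (i + 1) : ℝ) * u (i + 1) * v (j - (i + 1) + 1)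
      = (j.choose (i + 1) : ℝ) * u (i + 1) * v (j - i) := by
    intro i hi
    have : j - (i + 1) + 1 = j - i := by have := mem_range.mp hi; omega
    rw [this]
  rw [h1, Finset.sum_congr rfl h2]
  have h3 : ∑ i ∈ range (j + 1), (j.choose (i + 1) : ℝ) * u (i + 1) * v (j - i)
      = ∑ i ∈ range j, (j.choose (i + 1) : ℝ) * u (i + 1) * v (j - i) := by
    rw [Finset.sum_range_succ]; simp
  rw [h3]
  simp only [Nat.choose_zero_right, Nat.cast_one, one_mul, Nat.sub_zero]
  ring

lemma leibniz_iterD (f g : ℝ → ℝ) (hf : ContDiff ℝ (⊤ : ℕ∞) f) {n : ℕ∞}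
    (hg : ContDiff ℝ n g) :
    ∀ j : ℕ, (j : ℕ∞) ≤ n → ∀ x : ℝ,
      iteratedDeriv j (fun z => f z * g z) x
        = ∑ i ∈ range (j + 1),
            (j.choose i : ℝ) * iteratedDeriv i f x * iteratedDeriv (j - i) g x := by
  intro j
  induction j with
  | zero => intro _ x; simp
  | succ j ih =>
    intro hj x
    have hj' : (j : ℕ∞) ≤ n := le_trans (by exact_mod_cast Nat.le_succ j) hj
    have hfd : ∀ i : ℕ, Differentiable ℝ (iteratedDeriv i f) := fun i =>
      hf.differentiable_iteratedDeriv i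
        (by exact_mod_cast (lt_top_iff_ne_top.mpr (ENat.coe_ne_top i) : (i : ℕ∞) < ⊤))
    have hgd : ∀ i : ℕ, i ≤ j → Differentiable ℝ (iteratedDeriv i g) := by
      intro i hi
      apply hg.differentiable_iteratedDeriv i
      calc (i : WithTop ℕ∞) < ((j + 1 : ℕ) : WithTop ℕ∞) := by exact_mod_cast Nat.lt_succ_of_le hi
        _ ≤ _ := by exact_mod_cast hj
    have hterm : ∀ i ∈ range (j + 1), HasDerivAt
        (fun z => (j.choose i : ℝ) * iteratedDeriv i f z * iteratedDeriv (j - i) g z)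
        ((j.choose i : ℝ) * iteratedDeriv (i + 1) f x * iteratedDeriv (j - i) g x
          + (j.choose i : ℝ) * iteratedDeriv i f x * iteratedDeriv (j - i + 1) g x) x := by
      intro i hi
      have hi' : i ≤ j := Nat.lt_succ_iff.mp (mem_range.mp hi)
      have h1 : HasDerivAt (iteratedDeriv i f) (iteratedDeriv (i + 1) f x) x := by
        rw [iteratedDeriv_succ]; exact (hfd i x).hasDerivAt
      have h2 : HasDerivAt (iteratedDeriv (j - i) g) (iteratedDeriv (j - i + 1) g x) x := by
        rw [iteratedDeriv_succ]; exact (hgd (j - i) (Nat.sub_le j i) x).hasDerivAt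
      exact (h1.const_mul (j.choose i : ℝ)).mul h2
    have hsum : HasDerivAt
        (fun z => ∑ i ∈ range (j + 1),
          (j.choose i : ℝ) * iteratedDeriv i f z * iteratedDeriv (j - i) g z)
        (∑ i ∈ range (j + 1),
          ((j.choose i : ℝ) * iteratedDeriv (i + 1) f x * iteratedDeriv (j - i) g x
            + (j.choose i : ℝ) * iteratedDeriv i f x * iteratedDeriv (j - i + 1) g x)) x :=
      HasDerivAt.fun_sum hterm
    have hfun : iteratedDeriv j (fun z => f z * g z)
        = fun z => ∑ i ∈ range (j + 1),
            (j.choose i : ℝ) * iteratedDeriv i f z * iteratedDeriv (j - i) g z :=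
      funext fun z => ih hj' z
    rw [iteratedDeriv_succ, hfun, hsum.deriv]
    exact pascal_sum (fun i => iteratedDeriv i f x) (fun i => iteratedDeriv i g x) j

lemma deriv_monomial (m : ℕ) (y : ℝ) :
    deriv (fun x : ℝ => (x - y) ^ (m + 1) / ((m + 1).factorial : ℝ))
      = fun x => (x - y) ^ m / (m.factorial : ℝ) := by
  funext x
  have h : HasDerivAt (fun x : ℝ => (x - y) ^ (m + 1)) ((m + 1 : ℕ) * (x - y) ^ m) x := by
    have := ((hasDerivAt_id x).sub_const y).pow (m + 1)
    simpa [Pi.pow_def] using this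
  rw [deriv_div_const, h.deriv]
  rw [Nat.factorial_succ]
  have h1 : ((m + 1).factorial : ℝ) ≠ 0 := by positivity
  have h2 : (m.factorial : ℝ) ≠ 0 := by positivity
  field_simp
  push_cast
  ring

lemma iterD_monomial (y : ℝ) : ∀ i m : ℕ, i ≤ m →
    iteratedDeriv i (fun x : ℝ => (x - y) ^ m / (m.factorial : ℝ))
      = fun x => (x - y) ^ (m - i) / ((m - i).factorial : ℝ) := by
  intro i
  induction i with
  | zero => intro m _; simp [iteratedDeriv_zero]
  | succ i ih =>
    intro m hm
    rw [iteratedDeriv_succ, ih m (by omega)]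
    obtain ⟨r, hr⟩ : ∃ r, m - i = r + 1 := ⟨m - i - 1, by omega⟩
    rw [show m - (i + 1) = r by omega] at *
    rw [hr, deriv_monomial]

lemma iterD_monomial_zero (y : ℝ) (m : ℕ) : ∀ r : ℕ,
    iteratedDeriv (m + 1 + r) (fun x : ℝ => (x - y) ^ m / (m.factorial : ℝ)) = fun _ => 0 := by
  intro r
  induction r with
  | zero =>
    rw [iteratedDeriv_succ, iterD_monomial y m m le_rfl]
    simp
  | succ r ih =>
    have : m + 1 + (r + 1) = (m + 1 + r) + 1 := by omega
    rw [this, iteratedDeriv_succ, ih]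
    simp

lemma iterD_monomial_at (y : ℝ) (m i : ℕ) :
    iteratedDeriv i (fun x : ℝ => (x - y) ^ m / (m.factorial : ℝ)) y
      = if i = m then 1 else 0 := by
  rcases le_or_gt i m with h | h
  · rw [iterD_monomial y i m h]
    rcases eq_or_lt_of_le h with rfl | h'
    · simp
    · have : m - i ≠ 0 := by omega
      simp [this, zero_pow, if_neg (by omega : ¬ i = m)]
  · obtain ⟨r, hr⟩ : ∃ r, i = m + 1 + r := ⟨i - m - 1, by omega⟩
    rw [hr, iterD_monomial_zero y m r]
    simp [if_neg (by omega : ¬ m + 1 + r = m)]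

/-- Integration-by-parts identity for the k-th order dual of the diffusion operator
`a(x) d²/dx²`. -/
theorem stmt14 (k : ℕ) (hk : 3 ≤ k)
    (a : ℝ → ℝ) (ha : ContDiff ℝ (k : ℕ∞) a)
    (g : ℝ → ℝ) (hg : ContDiff ℝ (⊤ : ℕ∞) g) (hgs : HasCompactSupport g) (y : ℝ) :
    (∫ x in Set.Ioi y,
        (x - y) ^ (k - 3) / (Nat.factorial (k - 3) : ℝ) * a x
          * ((-1 : ℝ) ^ k * iteratedDeriv k g x))
      = a y * iteratedDeriv 2 g y - ((k : ℝ) - 2) * deriv a y * deriv g y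
        + ((k : ℝ) - 1) * ((k : ℝ) - 2) / 2 * iteratedDeriv 2 a y * g y
        + ∫ x in Set.Ioi y,
            g x * iteratedDeriv k
              (fun u => (u - y) ^ (k - 3) / (Nat.factorial (k - 3) : ℝ) * a u) x := by
  obtain ⟨m, rfl⟩ : ∃ m, k = m + 3 := ⟨k - 3, by omega⟩
  simp only [Nat.add_sub_cancel]
  set p : ℝ → ℝ := fun x => (x - y) ^ m / (m.factorial : ℝ) with hp_def
  set F : ℝ → ℝ := fun u => p u * a u with hF_def
  have hp : ContDiff ℝ (⊤ : ℕ∞) p :=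
    ((contDiff_id.sub contDiff_const).pow m).div_const _
  have hF : ContDiff ℝ ((m + 3 : ℕ) : ℕ∞) F := (hp.of_le (by exact_mod_cast (le_top : ((m + 3 : ℕ) : ℕ∞) ≤ ⊤))).mul ha
  -- values of iterated derivatives of F at y
  have Fval : ∀ j : ℕ, j ≤ m + 3 → iteratedDeriv j F y
      = if m ≤ j then (j.choose m : ℝ) * iteratedDeriv (j - m) a y else 0 := by
    intro j hj
    rw [show iteratedDeriv j F y = iteratedDeriv j (fun z => p z * a z) y from rfl,
      leibniz_iterD p a hp ha j (by exact_mod_cast hj) y]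
    have hterm : ∀ i ∈ range (j + 1),
        (j.choose i : ℝ) * iteratedDeriv i p y * iteratedDeriv (j - i) a y
          = if i = m then (j.choose m : ℝ) * iteratedDeriv (j - m) a y else 0 := by
      intro i _
      rw [hp_def, iterD_monomial_at]
      split_ifs with h
      · subst h; ring
      · ring
    rw [Finset.sum_congr rfl hterm, Finset.sum_ite_eq' (range (j + 1)) m
      (fun _ => (j.choose m : ℝ) * iteratedDeriv (j - m) a y)]
    simp [Finset.mem_range, Nat.lt_succ_iff]
  -- the induction: repeated integration by parts
  have main : ∀ n : ℕ, n ≤ m + 3 →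
      (∫ x in Set.Ioi y, F x * ((-1 : ℝ) ^ (m + 3) * iteratedDeriv (m + 3) g x))
        = (∑ j ∈ range n, (-1 : ℝ) ^ (m + 3 - j + 1) * iteratedDeriv j F y
            * iteratedDeriv (m + 2 - j) g y)
          + ∫ x in Set.Ioi y, iteratedDeriv n F x
              * ((-1 : ℝ) ^ (m + 3 - n) * iteratedDeriv (m + 3 - n) g x) := by
    intro n
    induction n with
    | zero => intro _; simp
    | succ n ih =>
      intro hn
      rw [ih (by omega), Finset.sum_range_succ]
      have hc : m + 3 - n = (m + 2 - n) + 1 := by omega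
      set c : ℕ := m + 2 - n with hc_def
      have hu : ContDiff ℝ 1 (iteratedDeriv n F) :=
        contDiff_one_iterD hF (by exact_mod_cast hn)
      have hv : ContDiff ℝ 1 (iteratedDeriv c g) :=
        contDiff_one_iterD hg le_top
      have hvs : HasCompactSupport (iteratedDeriv c g) := hcs_iterD hgs c
      have step1 : ∫ x in Set.Ioi y, iteratedDeriv n F x
            * ((-1 : ℝ) ^ (m + 3 - n) * iteratedDeriv (m + 3 - n) g x)
          = (-1 : ℝ) ^ (c + 1) * ∫ x in Set.Ioi y,
              iteratedDeriv n F x * deriv (iteratedDeriv c g) x := by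
        rw [← MeasureTheory.integral_const_mul]
        apply MeasureTheory.setIntegral_congr_fun measurableSet_Ioi
        intro x _
        rw [hc, iteratedDeriv_succ]
        ring
      rw [step1, ibp_step _ _ hu hv hvs y]
      have h2 : deriv (iteratedDeriv n F) = iteratedDeriv (n + 1) F :=
        (iteratedDeriv_succ).symm
      have h3 : ∫ x in Set.Ioi y, iteratedDeriv (n + 1) F x
            * ((-1 : ℝ) ^ (m + 3 - (n + 1)) * iteratedDeriv (m + 3 - (n + 1)) g x)
          = (-1 : ℝ) ^ c * ∫ x in Set.Ioi y,
              deriv (iteratedDeriv n F) x * iteratedDeriv c g x := by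
        rw [← MeasureTheory.integral_const_mul]
        apply MeasureTheory.setIntegral_congr_fun measurableSet_Ioi
        intro x _
        rw [h2, show m + 3 - (n + 1) = c from by omega]
        ring
      rw [h3]
      have h4 : m + 3 - n + 1 = c + 2 := by omega
      rw [h4]
      have hsq : (-1 : ℝ) ^ (c + 2) = (-1 : ℝ) ^ c := by
        rw [pow_add]; norm_num
      rw [hsq]
      ring
  have final := main (m + 3) le_rfl
  rw [Nat.sub_self] at final
  have hlast : ∫ x in Set.Ioi y, iteratedDeriv (m + 3) F x
        * ((-1 : ℝ) ^ 0 * iteratedDeriv 0 g x)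
      = ∫ x in Set.Ioi y, g x * iteratedDeriv (m + 3) F x := by
    apply MeasureTheory.setIntegral_congr_fun measurableSet_Ioi
    intro x _
    simp [iteratedDeriv_zero]
    ring
  rw [hlast] at final
  -- compute the boundary sum
  have hsum : (∑ j ∈ range (m + 3), (-1 : ℝ) ^ (m + 3 - j + 1) * iteratedDeriv j F y
        * iteratedDeriv (m + 2 - j) g y)
      = a y * iteratedDeriv 2 g y - ((m + 3 : ℝ) - 2) * deriv a y * deriv g y
        + ((m + 3 : ℝ) - 1) * ((m + 3 : ℝ) - 2) / 2 * iteratedDeriv 2 a y * g y := by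
    rw [Finset.sum_range_succ, Finset.sum_range_succ, Finset.sum_range_succ]
    have hz : ∑ j ∈ range m, (-1 : ℝ) ^ (m + 3 - j + 1) * iteratedDeriv j F y
        * iteratedDeriv (m + 2 - j) g y = 0 := by
      apply Finset.sum_eq_zero
      intro j hj
      have hjm := Finset.mem_range.mp hj
      rw [Fval j (by omega), if_neg (by omega)]
      ring
    rw [hz, Fval m (by omega), Fval (m + 1) (by omega), Fval (m + 2) (by omega),
      if_pos le_rfl, if_pos (by omega), if_pos (by omega)]
    rw [show m + 3 - m + 1 = 4 from by omega, show m + 3 - (m + 1) + 1 = 3 from by omega,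
      show m + 3 - (m + 2) + 1 = 2 from by omega, show m - m = 0 from by omega,
      show m + 1 - m = 1 from by omega, show m + 2 - m = 2 from by omega,
      show m + 2 - (m + 1) = 1 from by omega, show m + 2 - (m + 2) = 0 from by omega,
      Nat.choose_self, Nat.choose_succ_self_right]
    simp only [iteratedDeriv_zero, iteratedDeriv_one]
    have hch : ((m + 2).choose m : ℝ) = ((m + 3 : ℝ) - 1) * ((m + 3 : ℝ) - 2) / 2 := by
      rw [show (m + 2).choose m = (m + 2).choose 2 from by
        rw [← Nat.choose_symm (by omega : 2 ≤ m + 2), show m + 2 - 2 = m from by omega]]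
      rw [Nat.cast_choose_two]
      push_cast
      ring
    rw [hch]
    push_cast
    ring
  rw [hsum] at final
  convert final using 2
  push_cast
  ring
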